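/- Let c_l ∈ B^{k,l} denote the tableau all of whose columns equal (1,2,…,k)^t. Let p = (⊗_{j=1}^d b_j) ⊗ 1_k^{⊗(L−d)} be a state in (B^{k,1})^{⊗L}. Applying the combinatorial R : B^{k,l} ⊗ B^{k,1} → B^{k,1} ⊗ B^{k,l} successively L times gives a map B^{k,l} ⊗ (B^{k,1})^{⊗L} → (B^{k,1})^{⊗L} ⊗ B^{k,l} sending c_l ⊗ p to p̃ ⊗ c for some c ∈ B^{k,l}. If L is sufficiently large compared with d, then c = c_l. -/

import Mathlib

/-- A semistandard rectangular tableau with `k` rows, `l` columns and entries in `{1,…,n}`: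
rows weakly increase left to right, columns strictly increase top to bottom. -/
structure RectTableau (n k l : ℕ) where
  entry : Fin k → Fin l → ℕ
  entry_pos : ∀ i j, 1 ≤ entry i j
  entry_le : ∀ i j, entry i j ≤ n
  row_mono : ∀ i, Monotone (entry i)
  col_strict : ∀ j, StrictMono fun i => entry i j

namespace BBS

open scoped Classical

variable {n k l k' l' d d1 d2 : ℕ}

/-- The rows of a tableau, from top to bottom, each read left to right. -/
def toRows (x : RectTableau n k l) : List (List ℕ) :=
  (List.finRange k).map fun i => (List.finRange l).map fun j => x.entry i j

/-- The row word of a tableau: rows read left to right, bottom row first. -/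
def rowWord (x : RectTableau n k l) : List ℕ :=
  ((List.finRange k).reverse).flatMap fun i => (List.finRange l).map fun j => x.entry i j

/-- Schensted row insertion of a single letter into a tableau (given as a list of rows). -/
def rowInsertOne : List (List ℕ) → ℕ → List (List ℕ)
  | [], a => [[a]]
  | r :: rest, a =>
    match r.findIdx? (fun x => decide (a < x)) with
    | none => (r ++ [a]) :: rest
    | some idx => (r.set idx a) :: rowInsertOne rest (r.getD idx 0)

/-- Schensted row insertion of a word (leftmost letter first). -/
def rowInsertWord (T : List (List ℕ)) (w : List ℕ) : List (List ℕ) :=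
  w.foldl rowInsertOne T

/-- The combinatorial `R`-matrix `B^{k,l} ⊗ B^{k',l'} → B^{k',l'} ⊗ B^{k,l}`, defined through
its row-insertion characterization: `x ⊗ y ↦ x̃ ⊗ ỹ` where `y ← row(x) = ỹ ← row(x̃)`. -/
noncomputable def combR (x : RectTableau n k l) (y : RectTableau n k' l') :
    RectTableau n k' l' × RectTableau n k l :=
  if h : ∃ p : RectTableau n k' l' × RectTableau n k l,
      rowInsertWord (toRows p.2) (rowWord p.1) = rowInsertWord (toRows y) (rowWord x)
  then h.choose else (y, x)

/-- The number of boxes of a tableau strictly east of the `c`-th column. -/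
def eastCount (T : List (List ℕ)) (c : ℕ) : ℕ := (T.map fun r => r.length - c).sum

/-- The energy function `H` on `B^{k,l} ⊗ B^{k',l'}`. -/
def energyH (x : RectTableau n k l) (y : RectTableau n k' l') : ℤ :=
  (eastCount (rowInsertWord (toRows y) (rowWord x)) (max l l') : ℤ)
    - (min k k' : ℤ) * (min l l' : ℤ)

/-- The tableau `c_l = 1_k^l` all of whose columns are `(1,2,…,k)ᵗ`. -/
def constTab (n k l : ℕ) (h : k ≤ n) : RectTableau n k l where
  entry i _ := i.1 + 1
  entry_pos := by intro i j; omega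
  entry_le := by intro i j; have := i.isLt; omega
  row_mono := fun _ => monotone_const
  col_strict := by
    intro j a b hab
    have h3 : a.1 < b.1 := hab
    dsimp only; omega

/-- Passing the carrier `c ∈ B^{k,l}` through a sequence of boxes by iterating the
combinatorial `R : B^{k,l} ⊗ B^{k,1} → B^{k,1} ⊗ B^{k,l}`. -/
noncomputable def carrierPass : RectTableau n k l → List (RectTableau n k 1) →
    List (RectTableau n k 1) × RectTableau n k l
  | c, [] => ([], c)
  | c, b :: rest =>
    let bc := combR c b
    let rc := carrierPass bc.2 rest
    (bc.1 :: rc.1, rc.2)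

/-- The box ball time evolution `T_l`. -/
noncomputable def timeEv (h : k ≤ n) (l : ℕ) (p : List (RectTableau n k 1)) :
    List (RectTableau n k 1) :=
  (carrierPass (constTab n k l h) p).1

/-- `∑_j H(b^{(j-1)} ⊗ b_j)` along a carrier pass. -/
noncomputable def energySum : RectTableau n k l → List (RectTableau n k 1) → ℤ
  | _, [] => 0
  | c, b :: rest => energyH c b + energySum (combR c b).2 rest

/-- The conserved quantity `E_l(p) = -∑_j H(b^{(j-1)} ⊗ b_j)`. -/
noncomputable def bbsE (h : k ≤ n) (l : ℕ) (p : List (RectTableau n k 1)) : ℤ :=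
  - energySum (constTab n k l h) p

/-- The word used in the signature rule: columns from right to left, each read top to bottom. -/
def sigWord (x : RectTableau n k l) : List ℕ :=
  ((List.finRange l).reverse).flatMap fun j => (List.finRange k).map fun i => x.entry i j

/-- The positions of the unpaired `-`'s (letters `i+1`) and unpaired `+`'s (letters `i`) of a
word, after repeatedly deleting adjacent `+-` pairs.  The first component lists the unpaired
`-` positions in increasing order; the second lists the unpaired `+` positions in
decreasing order. -/
def sigUnpaired (i : ℕ) (w : List ℕ) : List ℕ × List ℕ :=
  (w.zipIdx.map Prod.swap).foldl (fun mp x =>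
    if x.2 = i then (mp.1, x.1 :: mp.2)
    else if x.2 = i + 1 then
      match mp.2 with
      | [] => (mp.1 ++ [x.1], [])
      | _ :: rest => (mp.1, rest)
    else mp) ([], [])

/-- The Kashiwara operator `e_i` on words, via the signature rule. -/
def eWord (i : ℕ) (w : List ℕ) : Option (List ℕ) :=
  match (sigUnpaired i w).1.getLast? with
  | none => none
  | some p => some (w.set p i)

/-- The Kashiwara operator `f_i` on words, via the signature rule. -/
def fWord (i : ℕ) (w : List ℕ) : Option (List ℕ) :=
  match (sigUnpaired i w).2.getLast? with
  | none => none
  | some p => some (w.set p (i + 1))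

/-- Kashiwara operator `e_i` on a two-fold tensor product of rectangular tableaux. -/
noncomputable def eTen (i : ℕ) (p : RectTableau n k l × RectTableau n k' l') :
    Option (RectTableau n k l × RectTableau n k' l') :=
  match eWord i (sigWord p.1 ++ sigWord p.2) with
  | none => none
  | some w =>
    if h : ∃ q : RectTableau n k l × RectTableau n k' l',
        sigWord q.1 ++ sigWord q.2 = w then some h.choose else none

/-- Kashiwara operator `f_i` on a two-fold tensor product of rectangular tableaux. -/
noncomputable def fTen (i : ℕ) (p : RectTableau n k l × RectTableau n k' l') :
    Option (RectTableau n k l × RectTableau n k' l') :=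
  match fWord i (sigWord p.1 ++ sigWord p.2) with
  | none => none
  | some w =>
    if h : ∃ q : RectTableau n k l × RectTableau n k' l',
        sigWord q.1 ++ sigWord q.2 = w then some h.choose else none

/-- Kashiwara operator `e_i` on `(B^{k,1})^{⊗L}`. -/
noncomputable def eList (i : ℕ) (p : List (RectTableau n k 1)) :
    Option (List (RectTableau n k 1)) :=
  match eWord i (p.flatMap sigWord) with
  | none => none
  | some w =>
    if h : ∃ q : List (RectTableau n k 1), q.length = p.length ∧ q.flatMap sigWord = w
    then some h.choose else none

/-- Kashiwara operator `f_i` on `(B^{k,1})^{⊗L}`. -/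
noncomputable def fList (i : ℕ) (p : List (RectTableau n k 1)) :
    Option (List (RectTableau n k 1)) :=
  match fWord i (p.flatMap sigWord) with
  | none => none
  | some w =>
    if h : ∃ q : List (RectTableau n k 1), q.length = p.length ∧ q.flatMap sigWord = w
    then some h.choose else none

/-- Elementary Knuth transformations. -/
inductive KnuthStep : List ℕ → List ℕ → Prop where
  | xzy (u v : List ℕ) (x y z : ℕ) (h1 : x ≤ y) (h2 : y < z) :
      KnuthStep (u ++ x :: z :: y :: v) (u ++ z :: x :: y :: v)
  | yxz (u v : List ℕ) (x y z : ℕ) (h1 : x < y) (h2 : y ≤ z) :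
      KnuthStep (u ++ y :: x :: z :: v) (u ++ y :: z :: x :: v)

/-- Knuth equivalence of words. -/
def KnuthEquiv : List ℕ → List ℕ → Prop := Relation.EqvGen KnuthStep

/-- The column `(1,…,k-2,m,b)ᵗ ∈ B^{k,1}` (where `m` sits in row `k-1` and `b` in row `k`). -/
def mkCol (n k m b : ℕ) (hm : k ≤ m + 1) (hb : m < b) (hn : b ≤ n) : RectTableau n k 1 where
  entry i _ := if i.1 + 1 = k then b else if i.1 + 2 = k then m else i.1 + 1
  entry_pos := by intro i j; split_ifs <;> omega
  entry_le := by intro i j; have := i.isLt; split_ifs <;> omega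
  row_mono := fun _ => monotone_const
  col_strict := by
    intro j a b' hab
    have h1 := a.isLt; have h2 := b'.isLt
    have h3 : a.1 < b'.1 := hab
    dsimp only; split_ifs <;> omega

/-- `[𝟎] = (1,…,k-1,k)ᵗ`. -/
def col0 (n k : ℕ) (hk : 1 ≤ k) (h : k ≤ n) : RectTableau n k 1 :=
  mkCol n k (k-1) k (by omega) (by omega) h
/-- `[𝟏] = (1,…,k-1,k+1)ᵗ`. -/
def col1 (n k : ℕ) (hk : 1 ≤ k) (h : k + 1 ≤ n) : RectTableau n k 1 :=
  mkCol n k (k-1) (k+1) (by omega) (by omega) h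
/-- `[𝟐₊] = (1,…,k-2,k,k+1)ᵗ`. -/
def col2p (n k : ℕ) (hk : 1 ≤ k) (h : k + 1 ≤ n) : RectTableau n k 1 :=
  mkCol n k k (k+1) (by omega) (by omega) h
/-- `[𝟐₋] = (1,…,k-2,k-1,k+2)ᵗ`. -/
def col2m (n k : ℕ) (hk : 1 ≤ k) (h : k + 2 ≤ n) : RectTableau n k 1 :=
  mkCol n k (k-1) (k+2) (by omega) (by omega) h
/-- `[𝟑] = (1,…,k-2,k,k+2)ᵗ`. -/
def col3 (n k : ℕ) (hk : 1 ≤ k) (h : k + 2 ≤ n) : RectTableau n k 1 :=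
  mkCol n k k (k+2) (by omega) (by omega) h
/-- `[𝟒] = (1,…,k-2,k+1,k+2)ᵗ`. -/
def col4 (n k : ℕ) (hk : 1 ≤ k) (h : k + 2 ≤ n) : RectTableau n k 1 :=
  mkCol n k (k+1) (k+2) (by omega) (by omega) h

/-- `ξ_i = [𝟎^{l-i} 𝟏^i] ∈ B^{k,l}`: the first `l-i` columns equal `[𝟎]`, the last `i`
columns equal `[𝟏]`. -/
def xiTab (n k l i : ℕ) (hk : 1 ≤ k) (hkn : k < n) : RectTableau n k l where
  entry r j := if r.1 + 1 = k ∧ l - i ≤ j.1 then k + 1 else r.1 + 1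
  entry_pos := by intro r j; split_ifs <;> omega
  entry_le := by intro r j; have := r.isLt; split_ifs <;> omega
  row_mono := by
    intro r a b hab
    have h3 : a.1 ≤ b.1 := hab
    dsimp only; split_ifs <;> omega
  col_strict := by
    intro j a b hab
    have h1 := a.isLt; have h2 := b.isLt
    have h3 : a.1 < b.1 := hab
    dsimp only; split_ifs <;> omega

/-- The rectangular tableau `[𝟏^a 𝟐_s^{ab-a} 𝟑^{d-ab}] ∈ B^{k,d}` whose first `a` columns are
`[𝟏]`, whose next columns (up to column `ab`) are `[𝟐₊]` (if `s`) or `[𝟐₋]` (if `¬s`), and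
whose remaining columns are `[𝟑]`. -/
def pat3 (n k d a ab : ℕ) (s : Bool) (hk : 2 ≤ k) (hn : k + 2 ≤ n) : RectTableau n k d where
  entry i j :=
    if i.1 + 1 = k then
      (if j.1 < a then k+1 else if j.1 < ab then (if s then k+1 else k+2) else k+2)
    else if i.1 + 2 = k then
      (if j.1 < a then k-1 else if j.1 < ab then (if s then k else k-1) else k)
    else i.1 + 1
  entry_pos := by intro i j; split_ifs <;> omega
  entry_le := by intro i j; have := i.isLt; split_ifs <;> omega
  row_mono := by
    intro i a' b' hab
    have h3 : a'.1 ≤ b'.1 := hab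
    dsimp only; split_ifs <;> omega
  col_strict := by
    intro j a' b' hab
    have h1 := a'.isLt; have h2 := b'.isLt
    have h3 : a'.1 < b'.1 := hab
    dsimp only; split_ifs <;> omega

/-- The `k`-th (bottom) row of a rectangular tableau, as an element of `B^{1,d}`. -/
def rowK (hk : 1 ≤ k) (u : RectTableau n k d) : RectTableau n 1 d where
  entry _ j := u.entry ⟨k - 1, by omega⟩ j
  entry_pos := fun _ j => u.entry_pos _ j
  entry_le := fun _ j => u.entry_le _ j
  row_mono := fun _ => u.row_mono _
  col_strict := by
    intro j a b hab
    have h3 : a.1 < b.1 := hab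
    have h1 := a.isLt; have h2 := b.isLt
    exact absurd h3 (by omega)

/-- The first `k-1` rows of a rectangular tableau, as an element of `B^{k-1,d}`. -/
def rowsLt (u : RectTableau n k d) : RectTableau n (k-1) d where
  entry i j := u.entry (Fin.castLE (Nat.sub_le k 1) i) j
  entry_pos := fun i j => u.entry_pos _ j
  entry_le := fun i j => u.entry_le _ j
  row_mono := fun i => u.row_mono _
  col_strict := by
    intro j a b hab
    exact u.col_strict j (show Fin.castLE (Nat.sub_le k 1) a < Fin.castLE (Nat.sub_le k 1) b from hab)

/-- The soliton conditions on a sequence of columns `S = (b_1,…,b_d)`, `b_j ∈ B^{k,1}`: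
entries weakly decrease along each row of the sequence, the entry in row `k-1` of each
column is `≤ k` and the entry in row `k` is `> k`.  (Strict increase down each column is
already part of the tableau structure.) -/
def IsSolitonFn {n k d : ℕ} (S : Fin d → RectTableau n k 1) : Prop :=
  (∀ j j' : Fin d, j.1 + 1 = j'.1 → ∀ (i : Fin k) (t : Fin 1),
      (S j').entry i t ≤ (S j).entry i t) ∧
  (∀ (j : Fin d) (i : Fin k) (t : Fin 1), i.1 + 1 = k → k < (S j).entry i t) ∧
  (∀ (j : Fin d) (i : Fin k) (t : Fin 1), i.1 + 2 = k → (S j).entry i t ≤ k)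

/-- `lo` and `hi` are the two pieces `u_{<k} ∈ B^{k-1,d}` and `u_k ∈ B^{1,d}` of the internal
degree of freedom `u = [b_d,…,b_1] ∈ B^{k,d}` of the soliton `S = (b_1,…,b_d)`. -/
def SplitDof {n k d : ℕ} (hk : 1 ≤ k) (S : Fin d → RectTableau n k 1)
    (lo : RectTableau n (k-1) d) (hi : RectTableau n 1 d) : Prop :=
  (∀ (i : Fin (k-1)) (j : Fin d),
      lo.entry i j = (S j.rev).entry (Fin.castLE (Nat.sub_le k 1) i) ⟨0, Nat.one_pos⟩) ∧
  (∀ (t : Fin 1) (j : Fin d),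
      hi.entry t j = (S j.rev).entry ⟨k - 1, by omega⟩ ⟨0, Nat.one_pos⟩)

/-- `(lo, hi) ∈ B^{k-1,d} × B^{1,d}` is the split internal degree of freedom of a soliton:
the entries of `lo` lie in `{1,…,k}` and those of `hi` in `{k+1,…,n}`. -/
def IsDof (k : ℕ) {n d : ℕ} (lo : RectTableau n (k-1) d) (hi : RectTableau n 1 d) : Prop :=
  (∀ i j, lo.entry i j ≤ k) ∧ (∀ t j, k < hi.entry t j)

/-- The two-body scattering map `R̃` on solitons with phases: internal degrees of freedom are
exchanged by the product of combinatorial `R`-matrices and the phases shift by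
`δ = 2 d₂ + H(u_k ⊗ v_k) + H(u_{<k} ⊗ v_{<k})`. -/
noncomputable def Rtilde {n k d1 d2 : ℕ}
    (a : ℤ × RectTableau n (k-1) d1 × RectTableau n 1 d1)
    (b : ℤ × RectTableau n (k-1) d2 × RectTableau n 1 d2) :
    (ℤ × RectTableau n (k-1) d2 × RectTableau n 1 d2)
      × (ℤ × RectTableau n (k-1) d1 × RectTableau n 1 d1) :=
  ((b.1 - (2 * (d2:ℤ) + energyH a.2.2 b.2.2 + energyH a.2.1 b.2.1),
      (combR a.2.1 b.2.1).1, (combR a.2.2 b.2.2).1),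
   (a.1 + (2 * (d2:ℤ) + energyH a.2.2 b.2.2 + energyH a.2.1 b.2.1),
      (combR a.2.1 b.2.1).2, (combR a.2.2 b.2.2).2))

end BBS

namespace BBS

/-! ### Generic lemmas about Schensted row insertion -/

lemma findIdx?_none_aux {a : ℕ} : ∀ (r : List ℕ) (i : ℕ), (∀ x ∈ r, x ≤ a) →
    List.findIdx?.go (fun x => decide (a < x)) r i = none := by
  intro r
  induction r with
  | nil => intro i _; rfl
  | cons y t ih =>
    intro i h
    have hy : ¬ a < y := not_lt.2 (h y (by simp))
    rw [List.findIdx?.go, if_neg (by simp [hy])]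
    exact ih (i+1) (fun x hx => h x (by simp [hx]))

lemma findIdx?_none_of_le {r : List ℕ} {a : ℕ} (h : ∀ x ∈ r, x ≤ a) :
    r.findIdx? (fun x => decide (a < x)) = none := findIdx?_none_aux r 0 h

lemma findIdx?_spec_aux {a q : ℕ} (s : List ℕ) (hq : a < q) :
    ∀ (p : List ℕ) (i : ℕ), (∀ x ∈ p, x ≤ a) →
    List.findIdx?.go (fun x => decide (a < x)) (p ++ q :: s) i = some (i + p.length) := by
  intro p
  induction p with
  | nil => intro i _; simp [List.findIdx?.go, hq]
  | cons y t ih =>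
    intro i hp
    have hy : ¬ a < y := not_lt.2 (hp y (by simp))
    rw [List.cons_append, List.findIdx?.go, if_neg (by simp [hy]),
      ih (i+1) (fun x hx => hp x (by simp [hx]))]
    simp only [List.length_cons]
    congr 1
    omega

lemma findIdx?_spec {p : List ℕ} {s : List ℕ} {a q : ℕ}
    (hp : ∀ x ∈ p, x ≤ a) (hq : a < q) :
    (p ++ q :: s).findIdx? (fun x => decide (a < x)) = some p.length := by
  show List.findIdx?.go _ _ 0 = _
  simpa using findIdx?_spec_aux s hq p 0 hp

/-- One insertion when every row bumps at a known split position, ending with an append. -/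
def ChainOK : ℕ → List (List ℕ × ℕ × List ℕ) → Prop
  | _, [] => True
  | a, (p, q, _) :: P => (∀ x ∈ p, x ≤ a) ∧ a < q ∧ ChainOK q P

def lastVal : ℕ → List (List ℕ × ℕ × List ℕ) → ℕ
  | a, [] => a
  | _, (_, q, _) :: P => lastVal q P

def bumpedRows : ℕ → List (List ℕ × ℕ × List ℕ) → List (List ℕ)
  | _, [] => []
  | a, (p, q, s) :: P => (p ++ a :: s) :: bumpedRows q P

lemma cascade (P : List (List ℕ × ℕ × List ℕ)) (r : List ℕ) (rest : List (List ℕ)) (a : ℕ)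
    (h1 : ChainOK a P) (h2 : ∀ x ∈ r, x ≤ lastVal a P) :
    rowInsertOne ((P.map fun t => t.1 ++ t.2.1 :: t.2.2) ++ r :: rest) a
      = bumpedRows a P ++ (r ++ [lastVal a P]) :: rest := by
  induction P generalizing a with
  | nil =>
    simp only [List.map_nil, List.nil_append, bumpedRows, lastVal] at *
    rw [rowInsertOne, findIdx?_none_of_le h2]
  | cons t P ih =>
    obtain ⟨p, q, s⟩ := t
    obtain ⟨hp, hq, hP⟩ := h1
    simp only [List.map_cons, List.cons_append, bumpedRows, lastVal] at *
    rw [rowInsertOne, findIdx?_spec hp hq]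
    dsimp only
    have hset : (p ++ q :: s).set p.length a = p ++ a :: s := by
      rw [List.set_eq_take_append_cons_drop]
      simp
    have hget : (p ++ q :: s).getD p.length 0 = q := by
      simp [List.getD, List.getElem?_append_right (le_refl p.length)]
    rw [hset, hget, ih q hP h2]

/-- Length never decreases under one insertion. -/
lemma length_rowInsertOne (T : List (List ℕ)) (a : ℕ) :
    T.length ≤ (rowInsertOne T a).length ∧
      (rowInsertOne T a).length ≤ T.length + 1 := by
  induction T generalizing a with
  | nil => simp [rowInsertOne]
  | cons r rest ih =>
    rw [rowInsertOne]
    cases h : r.findIdx? (fun x => decide (a < x)) with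
    | none => simp
    | some idx =>
      have := ih (r.getD idx 0)
      simp only [List.length_cons]
      omega

end BBS
namespace BBS

lemma findIdx?_some_lt {p : ℕ → Bool} :
    ∀ (r : List ℕ) (i j : ℕ), List.findIdx?.go p r i = some j → i ≤ j ∧ j - i < r.length := by
  intro r
  induction r with
  | nil => intro i j h; simp [List.findIdx?.go] at h
  | cons y t ih =>
    intro i j h
    rw [List.findIdx?.go] at h
    by_cases hp : p y = true
    · rw [if_pos hp] at h
      have hij : i = j := by injection h
      subst hij
      simp only [List.length_cons]
      omega
    · rw [if_neg hp] at h
      have := ih (i+1) j h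
      simp only [List.length_cons]
      omega

/-- entries multiset of a tableau-as-rows. -/
def msT (T : List (List ℕ)) : Multiset ℕ := (T.flatten : Multiset ℕ)

lemma msT_rowInsertOne (T : List (List ℕ)) (a : ℕ) :
    msT (rowInsertOne T a) = a ::ₘ msT T := by
  induction T generalizing a with
  | nil => simp [rowInsertOne, msT]
  | cons r rest ih =>
    rw [rowInsertOne]
    cases h : r.findIdx? (fun x => decide (a < x)) with
    | none =>
      simp only [msT, List.flatten_cons, List.append_assoc, List.singleton_append]
      rw [Multiset.cons_coe, Multiset.coe_eq_coe]
      exact List.perm_middle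
    | some idx =>
      have hidx : idx < r.length := by
        have := findIdx?_some_lt r 0 idx h
        omega
      have hset : r.set idx a = r.take idx ++ a :: r.drop (idx+1) := by
        rw [List.set_eq_take_append_cons_drop, if_pos hidx]
      have hgetD : r.getD idx 0 = r[idx] := List.getD_eq_getElem r 0 hidx
      have hr : r = r.take idx ++ r[idx] :: r.drop (idx+1) := by
        conv_lhs => rw [← List.take_append_drop idx r, List.drop_eq_getElem_cons hidx]
      simp only [msT, List.flatten_cons]
      rw [hset, hgetD]
      have hih : (rowInsertOne rest r[idx]).flatten.Perm (r[idx] :: rest.flatten) := by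
        have := ih r[idx]
        simp only [msT] at this
        rw [Multiset.cons_coe] at this
        exact Multiset.coe_eq_coe.1 this
      rw [Multiset.cons_coe, Multiset.coe_eq_coe, List.append_assoc, List.cons_append]
      have s1 : (List.take idx r ++ a :: (List.drop (idx+1) r ++ (rowInsertOne rest r[idx]).flatten)).Perm
          (a :: (List.take idx r ++ (List.drop (idx+1) r ++ (rowInsertOne rest r[idx]).flatten))) :=
        List.perm_middle
      have s2 : (List.take idx r ++ (List.drop (idx+1) r ++ (rowInsertOne rest r[idx]).flatten)).Perm
          (List.take idx r ++ (List.drop (idx+1) r ++ (r[idx] :: rest.flatten))) :=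
        (hih.append_left _).append_left _
      have s3 : (List.take idx r ++ (List.drop (idx+1) r ++ (r[idx] :: rest.flatten))).Perm
          (List.take idx r ++ (r[idx] :: (List.drop (idx+1) r ++ rest.flatten))) :=
        List.perm_middle.append_left _
      have s4 : r ++ rest.flatten = List.take idx r ++ (r[idx] :: (List.drop (idx+1) r ++ rest.flatten)) := by
        rw [← List.cons_append, ← List.append_assoc, ← hr]
      rw [s4]
      exact s1.trans (((s2.trans s3)).cons a)

lemma msT_rowInsertWord (T : List (List ℕ)) (w : List ℕ) :
    msT (rowInsertWord T w) = msT T + (w : Multiset ℕ) := by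
  induction w generalizing T with
  | nil => simp [rowInsertWord]
  | cons a w ih =>
    show msT (rowInsertWord (rowInsertOne T a) w) = _
    rw [ih, msT_rowInsertOne]
    rw [← Multiset.cons_coe, Multiset.add_cons, Multiset.cons_add]

lemma length_rowInsertWord_le (T : List (List ℕ)) (w : List ℕ) :
    T.length ≤ (rowInsertWord T w).length := by
  induction w generalizing T with
  | nil => simp [rowInsertWord]
  | cons a w ih =>
    show T.length ≤ (rowInsertWord (rowInsertOne T a) w).length
    exact le_trans (length_rowInsertOne T a).1 (ih _)

lemma lastRow_step {T : List (List ℕ)} {a : ℕ} (hT : T ≠ [])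
    (h : (rowInsertOne T a).length = T.length) :
    ∃ u, (rowInsertOne T a).getLast? = (T.getLast?).map (· ++ u) := by
  induction T generalizing a with
  | nil => exact absurd rfl hT
  | cons r rest ih =>
    rw [rowInsertOne] at *
    cases hf : r.findIdx? (fun x => decide (a < x)) with
    | none =>
      cases rest with
      | nil => exact ⟨[a], by simp⟩
      | cons r2 rest2 =>
        refine ⟨[], ?_⟩
        simp [List.getLast?_cons_cons]
    | some idx =>
      rw [hf] at h
      dsimp only at h ⊢
      cases rest with
      | nil =>
        exfalso
        simp [rowInsertOne] at h
      | cons r2 rest2 =>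
        have hlen : (rowInsertOne (r2 :: rest2) (r.getD idx 0)).length = (r2 :: rest2).length := by
          simp only [List.length_cons] at h ⊢
          omega
        obtain ⟨u, hu⟩ := ih (by simp) hlen
        refine ⟨u, ?_⟩
        have hne : rowInsertOne (r2 :: rest2) (r.getD idx 0) ≠ [] := by
          have := (length_rowInsertOne (r2 :: rest2) (r.getD idx 0)).1
          intro hh; rw [hh] at this; simp at this
        obtain ⟨y, t, hyt⟩ := List.exists_cons_of_ne_nil hne
        rw [hyt, List.getLast?_cons_cons, ← hyt, hu, List.getLast?_cons_cons]

lemma lastRow_word {T : List (List ℕ)} {w : List ℕ} (hT : T ≠ [])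
    (h : (rowInsertWord T w).length = T.length) :
    ∃ u, (rowInsertWord T w).getLast? = (T.getLast?).map (· ++ u) := by
  induction w generalizing T with
  | nil => exact ⟨[], by simp [rowInsertWord]⟩
  | cons a w ih =>
    have h1 : rowInsertWord T (a :: w) = rowInsertWord (rowInsertOne T a) w := rfl
    rw [h1] at h ⊢
    have hle1 := (length_rowInsertOne T a).1
    have hle2 := length_rowInsertWord_le (rowInsertOne T a) w
    have hlen1 : (rowInsertOne T a).length = T.length := by omega
    have hne1 : rowInsertOne T a ≠ [] := by
      intro hh
      rw [hh] at hle1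
      simp at hle1
      exact hT hle1
    obtain ⟨u2, hu2⟩ := ih hne1 (by omega)
    obtain ⟨u1, hu1⟩ := lastRow_step hT hlen1
    refine ⟨u1 ++ u2, ?_⟩
    rw [hu2, hu1]
    cases T.getLast? <;> simp

end BBS
namespace BBS

/-! ### Entry machinery -/

variable {n k l : ℕ}

/-- Total entry function (0-indexed), junk value 0 out of range. -/
def En (c : RectTableau n k l) (i j : ℕ) : ℕ :=
  if h : i < k ∧ j < l then c.entry ⟨i, h.1⟩ ⟨j, h.2⟩ else 0

lemma En_eq (c : RectTableau n k l) {i j : ℕ} (hi : i < k) (hj : j < l) :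
    En c i j = c.entry ⟨i, hi⟩ ⟨j, hj⟩ := dif_pos ⟨hi, hj⟩

lemma En_row_mono (c : RectTableau n k l) {i j j' : ℕ} (hi : i < k) (hj : j ≤ j') (hj' : j' < l) :
    En c i j ≤ En c i j' := by
  rw [En_eq c hi (lt_of_le_of_lt hj hj'), En_eq c hi hj']
  exact c.row_mono ⟨i, hi⟩ (show (⟨j, _⟩ : Fin l) ≤ ⟨j', hj'⟩ from hj)

lemma En_col_strict (c : RectTableau n k l) {i i' j : ℕ} (h : i < i') (hi' : i' < k) (hj : j < l) :
    En c i j < En c i' j := by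
  rw [En_eq c (lt_trans h hi') hj, En_eq c hi' hj]
  exact c.col_strict ⟨j, hj⟩ (show (⟨i, _⟩ : Fin k) < ⟨i', hi'⟩ from h)

lemma En_ge (c : RectTableau n k l) {i j : ℕ} (hi : i < k) (hj : j < l) :
    i + 1 ≤ En c i j := by
  induction i with
  | zero => rw [En_eq c hi hj]; exact c.entry_pos _ _
  | succ i ih =>
    have h1 := ih (by omega)
    have h2 := En_col_strict c (show i < i + 1 by omega) hi hj
    omega

lemma En_le_n (c : RectTableau n k l) {i j : ℕ} (hi : i < k) (hj : j < l) :
    En c i j ≤ n := by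
  rw [En_eq c hi hj]; exact c.entry_le _ _

lemma En_col_mono (c : RectTableau n k l) {i i' j : ℕ} (h : i ≤ i') (hi' : i' < k) (hj : j < l) :
    En c i j ≤ En c i' j := by
  rcases eq_or_lt_of_le h with rfl | h'
  · exact le_refl _
  · exact le_of_lt (En_col_strict c h' hi' hj)

lemma En_add_le (c : RectTableau n k l) {i j : ℕ} :
    ∀ d, i + d < k → j < l → En c i j + d ≤ En c (i + d) j := by
  intro d
  induction d with
  | zero => intro _ _; simp
  | succ d ih =>
    intro hd hj
    have h1 := ih (by omega) hj
    have h2 := En_col_strict c (show i + d < i + d + 1 by omega) (by omega) hj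
    have he : i + (d + 1) = i + d + 1 := by omega
    rw [he]
    omega

lemma En_add_le' (c : RectTableau n k l) {i i' j : ℕ} (h : i ≤ i') (hi' : i' < k) (hj : j < l) :
    En c i j + (i' - i) ≤ En c i' j := by
  have := En_add_le c (i := i) (j := j) (i' - i) (by omega) hj
  have he : i + (i' - i) = i' := by omega
  rw [he] at this
  omega

/-- Row `i` of `c` as a list. -/
def rowL (c : RectTableau n k l) (i : ℕ) : List ℕ := (List.range l).map (En c i)

lemma rowL_length (c : RectTableau n k l) (i : ℕ) : (rowL c i).length = l := by
  simp [rowL]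

lemma rowL_take (c : RectTableau n k l) (i : ℕ) {m : ℕ} (hm : m ≤ l) :
    (rowL c i).take m = (List.range m).map (En c i) := by
  rw [rowL, ← List.map_take, List.take_range, Nat.min_eq_left hm]

lemma rowL_getElem (c : RectTableau n k l) (i : ℕ) {m : ℕ} (hm : m < l) :
    (rowL c i)[m]'(by simp [rowL_length, hm]) = En c i m := by
  simp [rowL]

lemma rowL_drop_cons (c : RectTableau n k l) (i : ℕ) {m : ℕ} (hm : m < l) :
    (rowL c i).drop m = En c i m :: (rowL c i).drop (m+1) := by
  rw [List.drop_eq_getElem_cons (by simp [rowL_length, hm])]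
  rw [rowL_getElem c i hm]

lemma mem_take_rowL {c : RectTableau n k l} {i m x : ℕ} (hm : m ≤ l)
    (hx : x ∈ (rowL c i).take m) : ∃ s, s < m ∧ x = En c i s := by
  rw [rowL_take c i hm] at hx
  obtain ⟨s, hs, rfl⟩ := List.mem_map.1 hx
  exact ⟨s, List.mem_range.1 hs, rfl⟩

/-- `toRows` via `rowL`. -/
lemma toRows_eq (c : RectTableau n k l) : toRows c = (List.range k).map (rowL c) := by
  apply List.ext_getElem
  · simp [toRows]
  · intro i h1 h2
    have hik : i < k := by simpa [toRows] using h1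
    simp only [toRows, List.getElem_map, List.getElem_finRange, List.getElem_range]
    apply List.ext_getElem
    · simp [rowL]
    · intro j g1 g2
      have hjl : j < l := by simpa using g1
      simp [rowL, En_eq c hik hjl, Fin.cast]

lemma flatMap_reverse_eq {α β : Type*} (f : α → List β) (g : α → List β) (L : List α)
    (h : L.map f = L.map g) : L.reverse.flatMap f = L.reverse.flatMap g := by
  rw [List.flatMap_def, List.flatMap_def, List.map_reverse, List.map_reverse, h]

/-- `rowWord` via `rowL`. -/
lemma rowWord_eq (c : RectTableau n k l) :
    rowWord c = ((List.range k).reverse).flatMap (rowL c) := by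
  have h1 : rowWord c = ((List.finRange k).map (fun i => (List.finRange l).map
      (fun j => c.entry i j))).reverse.flatten := by
    rw [rowWord, List.flatMap_def, List.map_reverse]
  have h2 : (List.finRange k).map (fun i => (List.finRange l).map (fun j => c.entry i j))
      = (List.range k).map (rowL c) := toRows_eq c
  rw [h1, h2, List.flatMap_def, List.map_reverse]

/-- The glued tableau: the vacuum column glued to the left of `c`. -/
def glueRows (c : RectTableau n k l) : List (List ℕ) :=
  (List.range k).map (fun i => (i+1) :: rowL c i)

/-! ### Chain builder -/

lemma chain_build : ∀ (r : ℕ) (f : ℕ → List ℕ × ℕ × List ℕ) (g : ℕ → ℕ),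
    (∀ t, t < r → (∀ x ∈ (f t).1, x ≤ g t) ∧ g t < (f t).2.1 ∧ (f t).2.1 = g (t+1)) →
    ChainOK (g 0) ((List.range r).map f) ∧ lastVal (g 0) ((List.range r).map f) = g r ∧
      bumpedRows (g 0) ((List.range r).map f)
        = (List.range r).map (fun t => (f t).1 ++ g t :: (f t).2.2) := by
  intro r
  induction r with
  | zero => intro f g _; exact ⟨trivial, rfl, rfl⟩
  | succ r ih =>
    intro f g h
    obtain ⟨h1, h2, h3⟩ := h 0 (Nat.succ_pos r)
    have key := ih (f ∘ Nat.succ) (g ∘ Nat.succ) (by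
      intro t ht
      obtain ⟨a1, a2, a3⟩ := h (t+1) (by omega)
      exact ⟨a1, a2, a3⟩)
    rw [List.range_succ_eq_map, List.map_cons, List.map_cons, List.map_map, List.map_map]
    obtain ⟨k1, k2, k3⟩ := key
    simp only [Function.comp] at k1 k2 k3
    rcases hf0 : f 0 with ⟨p0, q0, s0⟩
    rw [hf0] at h3
    simp only at h3
    refine ⟨?_, ?_, ?_⟩
    · show ChainOK (g 0) ((p0, q0, s0) :: _)
      refine ⟨by rw [hf0] at h1; exact h1, by rw [hf0] at h2; exact h2, ?_⟩
      rw [h3]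
      exact k1
    · show lastVal (g 0) ((p0, q0, s0) :: _) = _
      show lastVal q0 _ = _
      rw [h3]
      exact k2
    · show (p0 ++ g 0 :: s0) :: bumpedRows q0 _ = _
      rw [h3, k3]
      simp [hf0, Function.comp, Nat.succ_eq_add_one]

end BBS
namespace BBS

variable {n k l : ℕ}

lemma rowInsertWord_nil (T : List (List ℕ)) : rowInsertWord T [] = T := rfl

lemma rowInsertWord_cons (T : List (List ℕ)) (a : ℕ) (w : List ℕ) :
    rowInsertWord T (a :: w) = rowInsertWord (rowInsertOne T a) w := rfl

lemma rowInsertWord_append (T : List (List ℕ)) (w1 w2 : List ℕ) :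
    rowInsertWord T (w1 ++ w2) = rowInsertWord (rowInsertWord T w1) w2 :=
  List.foldl_append

lemma rowL_take_succ (c : RectTableau n k l) (i : ℕ) {m : ℕ} (hm : m < l) :
    (rowL c i).take (m+1) = (rowL c i).take m ++ [En c i m] := by
  rw [rowL_take c i (by omega), rowL_take c i (le_of_lt hm), List.range_succ, List.map_append]
  rfl

lemma rowL_take_all (c : RectTableau n k l) (i : ℕ) : (rowL c i).take l = rowL c i := by
  apply List.take_of_length_le
  rw [rowL_length]

lemma rowL_drop_all (c : RectTableau n k l) (i : ℕ) : (rowL c i).drop l = [] := by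
  apply List.drop_eq_nil_of_le
  rw [rowL_length]

/-- Bump data for inserting letter `m` of row `j` of `c` into the partial glued tableau. -/
def fG1 (c : RectTableau n k l) (j m : ℕ) : ℕ → List ℕ × ℕ × List ℕ := fun t =>
  ((t+1) :: (rowL c (j+t)).take m, En c (j+t+1) m, (rowL c (j+t+1)).drop (m+1))

def gG1 (c : RectTableau n k l) (j m : ℕ) : ℕ → ℕ := fun t => En c (j+t) m

/-- Intermediate state for G1: rows `k-1, …, j+1` of `c` inserted, then `m` letters of row `j`. -/
def StG1 (c : RectTableau n k l) (j m : ℕ) : List (List ℕ) :=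
  ((List.range (k-1-j)).map fun t => (t+1) :: ((rowL c (j+t)).take m ++ (rowL c (j+t+1)).drop m))
    ++ ((k-j) :: (rowL c (k-1)).take m)
    :: ((List.range j).map fun t => [k-j+t+1])

lemma StG1_step (c : RectTableau n k l) {j m : ℕ} (hk : 1 ≤ k) (hj : j ≤ k-1) (hm : m < l) :
    rowInsertOne (StG1 c j m) (En c j m) = StG1 c j (m+1) := by
  have hcond : ∀ t, t < k-1-j → (∀ x ∈ (fG1 c j m t).1, x ≤ gG1 c j m t) ∧
      gG1 c j m t < (fG1 c j m t).2.1 ∧ (fG1 c j m t).2.1 = gG1 c j m (t+1) := by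
    intro t ht
    refine ⟨?_, ?_, ?_⟩
    · intro x hx
      rcases List.mem_cons.1 hx with rfl | hx
      · have := En_ge c (i := j+t) (j := m) (by omega) hm
        show t + 1 ≤ En c (j+t) m
        omega
      · obtain ⟨s, hs, rfl⟩ := mem_take_rowL (le_of_lt hm) hx
        exact En_row_mono c (by omega) (le_of_lt hs) hm
    · exact En_col_strict c (by omega) (by omega) hm
    · show En c (j+t+1) m = En c (j+(t+1)) m
      rfl
  obtain ⟨h1, h2, h3⟩ := chain_build (k-1-j) (fG1 c j m) (gG1 c j m) hcond
  have key := cascade ((List.range (k-1-j)).map (fG1 c j m))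
      ((k-j) :: (rowL c (k-1)).take m)
      ((List.range j).map fun t => [k-j+t+1]) (En c j m)
      (by show ChainOK (gG1 c j m 0) _; exact h1)
      (by
        intro x hx
        have hlast : lastVal (En c j m) ((List.range (k-1-j)).map (fG1 c j m)) = En c (k-1) m := by
          show lastVal (gG1 c j m 0) _ = _
          rw [h2]
          show En c (j + (k-1-j)) m = _
          congr 1
          omega
        rw [hlast]
        rcases List.mem_cons.1 hx with rfl | hx
        · have := En_ge c (i := k-1) (j := m) (by omega) hm
          omega
        · obtain ⟨s, hs, rfl⟩ := mem_take_rowL (le_of_lt hm) hx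
          exact En_row_mono c (by omega) (le_of_lt hs) hm)
  have hmapL : ((List.range (k-1-j)).map (fG1 c j m)).map (fun t => t.1 ++ t.2.1 :: t.2.2)
      = (List.range (k-1-j)).map fun t => (t+1) :: ((rowL c (j+t)).take m ++ (rowL c (j+t+1)).drop m) := by
    rw [List.map_map]
    apply List.map_congr_left
    intro t ht
    show ((t+1) :: (rowL c (j+t)).take m) ++ En c (j+t+1) m :: (rowL c (j+t+1)).drop (m+1) = _
    rw [← rowL_drop_cons c (j+t+1) hm]
    simp
  have hbump : bumpedRows (En c j m) ((List.range (k-1-j)).map (fG1 c j m))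
      = (List.range (k-1-j)).map fun t =>
          (t+1) :: ((rowL c (j+t)).take (m+1) ++ (rowL c (j+t+1)).drop (m+1)) := by
    have h3' : bumpedRows (gG1 c j m 0) ((List.range (k-1-j)).map (fG1 c j m)) = _ := h3
    rw [show En c j m = gG1 c j m 0 from rfl, h3']
    apply List.map_congr_left
    intro t ht
    show ((t+1) :: (rowL c (j+t)).take m) ++ En c (j+t) m :: (rowL c (j+t+1)).drop (m+1) = _
    rw [rowL_take_succ c (j+t) hm]
    simp
  have hlast2 : lastVal (En c j m) ((List.range (k-1-j)).map (fG1 c j m)) = En c (k-1) m := by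
    show lastVal (gG1 c j m 0) _ = _
    rw [h2]
    show En c (j + (k-1-j)) m = _
    congr 1
    omega
  rw [StG1, ← hmapL]
  rw [key, hbump, hlast2, StG1]
  congr 1
  rw [rowL_take_succ c (k-1) hm]
  simp

lemma StG1_row (c : RectTableau n k l) {j : ℕ} (hk : 1 ≤ k) (hj : j ≤ k-1) :
    rowInsertWord (StG1 c j 0) (rowL c j) = StG1 c j l := by
  have main : ∀ i m, m + i = l →
      rowInsertWord (StG1 c j m) ((List.range' m i).map (En c j)) = StG1 c j l := by
    intro i
    induction i with
    | zero =>
      intro m hm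
      have : m = l := by omega
      subst this
      rfl
    | succ i ih =>
      intro m hm
      rw [List.range'_succ, List.map_cons, rowInsertWord_cons, StG1_step c hk hj (by omega)]
      exact ih (m+1) (by omega)
  have hr : rowL c j = (List.range' 0 l).map (En c j) := by rw [rowL, List.range_eq_range']
  rw [hr]
  exact main l 0 (by omega)

lemma StG1_shift (c : RectTableau n k l) {j : ℕ} (hj1 : 1 ≤ j) (hj : j ≤ k-1) :
    StG1 c j l = StG1 c (j-1) 0 := by
  have hr1 : List.range (k-1-(j-1)) = List.range (k-1-j) ++ [k-1-j] := by
    rw [show k-1-(j-1) = (k-1-j)+1 from by omega, List.range_succ]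
  have hr2 : List.range j = 0 :: (List.range (j-1)).map Nat.succ := by
    conv_lhs => rw [show j = (j-1)+1 from by omega]
    rw [List.range_succ_eq_map]
  rw [StG1, StG1, hr1, hr2, List.map_append, List.map_cons, List.map_map]
  have eA : (List.range (k-1-j)).map
        (fun t => (t+1) :: ((rowL c (j+t)).take l ++ (rowL c (j+t+1)).drop l))
      = (List.range (k-1-j)).map
        (fun t => (t+1) :: ((rowL c (j-1+t)).take 0 ++ (rowL c (j-1+t+1)).drop 0)) := by
    apply List.map_congr_left
    intro t ht
    rw [rowL_take_all, rowL_drop_all, List.append_nil, List.take_zero, List.drop_zero,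
      List.nil_append]
    congr 2
    omega
  have eMid : (List.map (fun t => (t+1) :: ((rowL c (j-1+t)).take 0 ++ (rowL c (j-1+t+1)).drop 0))
        [k-1-j] : List (List ℕ))
      = [(k-j) :: (rowL c (k-1)).take l] := by
    rw [rowL_take_all]
    simp only [List.map_cons, List.map_nil, List.take_zero, List.drop_zero, List.nil_append]
    congr 3
    · omega
    · omega
  have eRest : ([k-j+0+1] : List ℕ) = (k-(j-1)) :: (rowL c (k-1)).take 0 := by
    rw [List.take_zero]
    show [k-j+0+1] = [k-(j-1)]
    congr 1
    omega
  have eRest2 : (List.range (j-1)).map ((fun t => [k-j+t+1]) ∘ Nat.succ)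
      = (List.range (j-1)).map (fun t => [k-(j-1)+t+1]) := by
    apply List.map_congr_left
    intro t ht
    show [k-j+(t+1)+1] = [k-(j-1)+t+1]
    congr 1
    omega
  rw [eA, eRest, eRest2, eMid, List.append_assoc]
  try rfl

lemma StG1_init (c : RectTableau n k l) (hk : 1 ≤ k) (hkn : k ≤ n) :
    StG1 c (k-1) 0 = toRows (constTab n k 1 hkn) := by
  have e1 : k-1-(k-1) = 0 := by omega
  have e2 : k-(k-1) = 1 := by omega
  rw [StG1, e1, e2]
  simp only [List.range_zero, List.map_nil, List.nil_append, List.take_zero]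
  rw [toRows_eq]
  have hrow : (List.range k).map (rowL (constTab n k 1 hkn))
      = (List.range k).map (fun i => [i+1]) := by
    apply List.map_congr_left
    intro i hi
    have hik : i < k := List.mem_range.1 hi
    show (List.range 1).map (En (constTab n k 1 hkn) i) = _
    have : En (constTab n k 1 hkn) i 0 = i + 1 := by
      rw [En_eq _ hik (by omega)]
      rfl
    rw [show List.range 1 = [0] from rfl]
    simp only [List.map_cons, List.map_nil, this]
  rw [hrow]
  have gen : ∀ K : ℕ, (List.range (K+1)).map (fun i => [i+1])
      = [1] :: (List.range K).map (fun t => [t+2]) := by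
    intro K
    rw [List.range_succ_eq_map, List.map_cons, List.map_map]
    rfl
  have := gen (k-1)
  rw [Nat.sub_add_cancel hk] at this
  rw [this]
  congr 1
  apply List.map_congr_left
  intro t ht
  show [1+t+1] = [t+2]
  congr 1
  omega

lemma StG1_final (c : RectTableau n k l) (hk : 1 ≤ k) : StG1 c 0 l = glueRows c := by
  have gen : ∀ K : ℕ, (List.range (K+1)).map (fun i => (i+1) :: rowL c i)
      = (List.range K).map (fun i => (i+1) :: rowL c i) ++ [(K+1) :: rowL c K] := by
    intro K
    rw [List.range_succ, List.map_append]
    rfl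
  have hg := gen (k-1)
  rw [Nat.sub_add_cancel hk] at hg
  rw [glueRows, hg, StG1]
  have e1 : k - 1 - 0 = k - 1 := by omega
  have e2 : k - 0 = k := by omega
  rw [e1, e2]
  simp only [List.range_zero, List.map_nil]
  have m1 : (List.range (k-1)).map (fun t => (t+1) :: ((rowL c (0+t)).take l ++ (rowL c (0+t+1)).drop l))
      = (List.range (k-1)).map (fun i => (i+1) :: rowL c i) := by
    apply List.map_congr_left
    intro t ht
    rw [rowL_take_all, rowL_drop_all, List.append_nil]
    congr 2
    omega
  rw [m1, rowL_take_all]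
  try rw [Nat.sub_add_cancel hk]

/-- **G1**: inserting the row word of `c` into the vacuum column gives the glued tableau. -/
lemma G1 (c : RectTableau n k l) (hk : 1 ≤ k) (hl : 1 ≤ l) (hkn : k ≤ n) :
    rowInsertWord (toRows (constTab n k 1 hkn)) (rowWord c) = glueRows c := by
  have main : ∀ j, j ≤ k-1 →
      rowInsertWord (StG1 c j 0) (((List.range (j+1)).reverse).flatMap (rowL c)) = glueRows c := by
    intro j
    induction j with
    | zero =>
      intro _
      have h01 : ((List.range 1).reverse).flatMap (rowL c) = rowL c 0 := by
        rw [show List.range 1 = [0] from rfl]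
        simp
      rw [h01, StG1_row c hk (by omega), StG1_final c hk]
    | succ j ih =>
      intro hj
      have hrev : (List.range (j+2)).reverse = (j+1) :: (List.range (j+1)).reverse := by
        rw [List.range_succ, List.reverse_append]
        rfl
      rw [hrev, List.flatMap_cons, rowInsertWord_append,
        StG1_row c hk hj, StG1_shift c (by omega) hj]
      exact ih (by omega)
  have h0 := main (k-1) (le_refl _)
  rw [Nat.sub_add_cancel hk] at h0
  rw [rowWord_eq, ← StG1_init c hk hkn]
  exact h0

end BBS
namespace BBS

variable {n k l : ℕ}

/-- The last column of `c`, as an element of `B^{k,1}`. -/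
def lastColTab (c : RectTableau n k l) (hl : 1 ≤ l) : RectTableau n k 1 where
  entry i _ := c.entry i ⟨l-1, by omega⟩
  entry_pos := fun i j => c.entry_pos _ _
  entry_le := fun i j => c.entry_le _ _
  row_mono := fun _ => monotone_const
  col_strict := fun _ _ _ hab => c.col_strict _ hab

/-- `c` with columns shifted right by one, a vacuum column inserted on the left. -/
def shiftTab (c : RectTableau n k l) : RectTableau n k l where
  entry i j := if j.1 = 0 then i.1 + 1 else En c i.1 (j.1 - 1)
  entry_pos := by
    intro i j
    split_ifs with h
    · omega
    · have := En_ge c (i := i.1) (j := j.1 - 1) i.isLt (by omega)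
      omega
  entry_le := by
    intro i j
    split_ifs with h
    · have h1 := i.isLt
      have h2 := En_ge c (i := i.1) (j := 0) i.isLt (by omega)
      have h3 := En_le_n c (i := i.1) (j := 0) i.isLt (by omega)
      omega
    · exact En_le_n c i.isLt (by omega)
  row_mono := by
    intro i a b hab
    have hab' : a.1 ≤ b.1 := hab
    dsimp only
    split_ifs with h1 h2 h2
    · exact le_refl _
    · have := En_ge c (i := i.1) (j := b.1 - 1) i.isLt (by omega)
      omega
    · omega
    · exact En_row_mono c i.isLt (by omega) (by omega)
  col_strict := by
    intro j a b hab
    have hab' : a.1 < b.1 := hab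
    dsimp only
    split_ifs with h1
    · omega
    · exact En_col_strict c hab' b.isLt (by omega)

lemma En_shiftTab (c : RectTableau n k l) {i j : ℕ} (hi : i < k) (hj : j < l) :
    En (shiftTab c) i j = if j = 0 then i + 1 else En c i (j - 1) := by
  rw [En_eq _ hi hj]
  rfl

lemma rowL_shiftTab (c : RectTableau n k l) {i : ℕ} (hi : i < k) (hl : 1 ≤ l) :
    rowL (shiftTab c) i = (i+1) :: (rowL c i).take (l-1) := by
  have hr : List.range l = 0 :: (List.range (l-1)).map Nat.succ := by
    conv_lhs => rw [show l = (l-1)+1 from (Nat.sub_add_cancel hl).symm]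
    rw [List.range_succ_eq_map]
  rw [rowL, hr, List.map_cons, List.map_map, rowL_take c i (show l-1 ≤ l from by omega)]
  congr 1
  · rw [En_shiftTab c hi (by omega)]
    rfl
  · apply List.map_congr_left
    intro t ht
    have htl := List.mem_range.1 ht
    show En (shiftTab c) i (t+1) = En c i t
    rw [En_shiftTab c hi (by omega)]
    simp

lemma flatMap_singleton_map {α β : Type*} (L : List α) (f : α → β) :
    L.flatMap (fun i => [f i]) = L.map f := by
  induction L with
  | nil => rfl
  | cons a t ih => rw [List.flatMap_cons, List.map_cons, ih]; rfl

lemma rowWord_lastColTab (c : RectTableau n k l) (hl : 1 ≤ l) :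
    rowWord (lastColTab c hl) = ((List.range k).reverse).map (fun i => En c i (l-1)) := by
  rw [rowWord_eq]
  have : rowL (lastColTab c hl) = fun i => [En c i (l-1)] := by
    funext i
    rw [rowL, show List.range 1 = [0] from rfl, List.map_cons, List.map_nil]
    congr 1
    by_cases hi : i < k
    · rw [En_eq _ hi (by omega), En_eq c hi (by omega)]
      rfl
    · rw [En, dif_neg (by omega), En, dif_neg (by omega)]
  rw [this, flatMap_singleton_map]

/-- Bump data for G2. -/
def fG2 (c : RectTableau n k l) (j : ℕ) : ℕ → List ℕ × ℕ × List ℕ := fun t =>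
  ((t+1) :: (rowL c t).take (l-1), En c (j+t+1) (l-1), ([] : List ℕ))

def gG2 (c : RectTableau n k l) (j : ℕ) : ℕ → ℕ := fun t => En c (j+t) (l-1)

/-- Intermediate state for G2. -/
def UG2 (c : RectTableau n k l) (j : ℕ) : List (List ℕ) :=
  ((List.range (k-j)).map fun t => (t+1) :: ((rowL c t).take (l-1) ++ [En c (t+j) (l-1)]))
    ++ (List.range j).map (fun t => ((k-j+t+1) :: (rowL c (k-j+t)).take (l-1)))

lemma UG2_step (c : RectTableau n k l) {j : ℕ} (hl : 1 ≤ l) (hj : j + 1 ≤ k) :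
    rowInsertOne (UG2 c (j+1)) (En c j (l-1)) = UG2 c j := by
  have hll : l - 1 < l := by omega
  have hcond : ∀ t, t < k-j-1 → (∀ x ∈ (fG2 c j t).1, x ≤ gG2 c j t) ∧
      gG2 c j t < (fG2 c j t).2.1 ∧ (fG2 c j t).2.1 = gG2 c j (t+1) := by
    intro t ht
    refine ⟨?_, ?_, ?_⟩
    · intro x hx
      rcases List.mem_cons.1 hx with rfl | hx
      · have := En_ge c (i := j+t) (j := l-1) (by omega) hll
        show t + 1 ≤ En c (j+t) (l-1)
        omega
      · obtain ⟨s, hs, rfl⟩ := mem_take_rowL (by omega) hx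
        calc En c t s ≤ En c t (l-1) := En_row_mono c (by omega) (by omega) hll
          _ ≤ En c (j+t) (l-1) := En_col_mono c (by omega) (by omega) hll
    · exact En_col_strict c (by omega) (by omega) hll
    · show En c (j+t+1) (l-1) = En c (j+(t+1)) (l-1)
      rfl
  obtain ⟨h1, h2, h3⟩ := chain_build (k-j-1) (fG2 c j) (gG2 c j) hcond
  have hlast : lastVal (En c j (l-1)) ((List.range (k-j-1)).map (fG2 c j)) = En c (k-1) (l-1) := by
    show lastVal (gG2 c j 0) _ = _
    rw [h2]
    show En c (j+(k-j-1)) (l-1) = _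
    rw [show j+(k-j-1) = k-1 from by omega]
  have key := cascade ((List.range (k-j-1)).map (fG2 c j))
      ((k-j) :: (rowL c (k-j-1)).take (l-1))
      ((List.range j).map (fun t => ((k-j+t+1) :: (rowL c (k-j+t)).take (l-1))))
      (En c j (l-1))
      (by show ChainOK (gG2 c j 0) _; exact h1)
      (by
        intro x hx
        rw [hlast]
        rcases List.mem_cons.1 hx with rfl | hx
        · have := En_ge c (i := k-1) (j := l-1) (by omega) hll
          omega
        · obtain ⟨s, hs, rfl⟩ := mem_take_rowL (by omega) hx
          calc En c (k-j-1) s ≤ En c (k-j-1) (l-1) := En_row_mono c (by omega) (by omega) hll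
            _ ≤ En c (k-1) (l-1) := En_col_mono c (by omega) (by omega) hll)
  -- identify the starting tableau with UG2 c (j+1)
  have hsplit : UG2 c (j+1)
      = (((List.range (k-j-1)).map (fG2 c j)).map fun t => t.1 ++ t.2.1 :: t.2.2)
        ++ ((k-j) :: (rowL c (k-j-1)).take (l-1))
          :: ((List.range j).map (fun t => ((k-j+t+1) :: (rowL c (k-j+t)).take (l-1)))) := by
    rw [UG2, List.map_map]
    have e1 : List.range (j+1) = 0 :: (List.range j).map Nat.succ := List.range_succ_eq_map (n := j)
    rw [e1, List.map_cons, List.map_map]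
    congr 1
    · apply List.map_congr_left
      intro t ht
      have htt := List.mem_range.1 ht
      show (t+1) :: ((rowL c t).take (l-1) ++ [En c (t+(j+1)) (l-1)])
          = ((t+1) :: (rowL c t).take (l-1)) ++ En c (j+t+1) (l-1) :: []
      rw [show t+(j+1) = j+t+1 from by omega]
      simp
    · have hhead : ((k-(j+1)+0+1) :: (rowL c (k-(j+1)+0)).take (l-1))
          = ((k-j) :: (rowL c (k-j-1)).take (l-1)) := by
        rw [show k-(j+1)+0+1 = k-j from by omega, show k-(j+1)+0 = k-j-1 from by omega]
      have htail : (List.range j).map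
            ((fun t => ((k-(j+1)+t+1) :: (rowL c (k-(j+1)+t)).take (l-1))) ∘ Nat.succ)
          = (List.range j).map (fun t => ((k-j+t+1) :: (rowL c (k-j+t)).take (l-1))) := by
        apply List.map_congr_left
        intro t ht
        show ((k-(j+1)+(t+1)+1) :: (rowL c (k-(j+1)+(t+1))).take (l-1)) = _
        rw [show k-(j+1)+(t+1)+1 = k-j+t+1 from by omega,
          show k-(j+1)+(t+1) = k-j+t from by omega]
      show ((k-(j+1)+0+1) :: (rowL c (k-(j+1)+0)).take (l-1)) :: (List.range j).map
            ((fun t => ((k-(j+1)+t+1) :: (rowL c (k-(j+1)+t)).take (l-1))) ∘ Nat.succ) = _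
      rw [hhead, htail]
  rw [hsplit, key, hlast]
  have hbump : bumpedRows (En c j (l-1)) ((List.range (k-j-1)).map (fG2 c j))
      = (List.range (k-j-1)).map
          (fun t => (t+1) :: ((rowL c t).take (l-1) ++ [En c (t+j) (l-1)])) := by
    have h3' : bumpedRows (gG2 c j 0) ((List.range (k-j-1)).map (fG2 c j)) = _ := h3
    rw [show En c j (l-1) = gG2 c j 0 from rfl, h3']
    apply List.map_congr_left
    intro t ht
    show ((t+1) :: (rowL c t).take (l-1)) ++ En c (j+t) (l-1) :: [] = _
    rw [show j+t = t+j from by omega]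
    simp
  rw [hbump, UG2]
  have e2 : List.range (k-j) = List.range (k-j-1) ++ [k-j-1] := by
    have := List.range_succ (n := k-j-1)
    rw [Nat.succ_eq_add_one, show (k-j-1)+1 = k-j from by omega] at this
    exact this
  rw [e2, List.map_append, List.append_assoc]
  congr 1
  rw [List.map_cons, List.map_nil, List.singleton_append]
  congr 1
  rw [show k-j-1+1 = k-j from by omega, show k-j-1+j = k-1 from by omega]
  simp

lemma UG2_init (c : RectTableau n k l) (hl : 1 ≤ l) : UG2 c k = toRows (shiftTab c) := by
  rw [UG2, toRows_eq]
  rw [show k - k = 0 from by omega]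
  simp only [List.range_zero, List.map_nil, List.nil_append]
  apply List.map_congr_left
  intro t ht
  have htk := List.mem_range.1 ht
  rw [rowL_shiftTab c htk hl]
  show (0+t+1) :: (rowL c (0+t)).take (l-1) = _
  congr 2
  · omega
  · congr 1
    omega

lemma UG2_final (c : RectTableau n k l) (hl : 1 ≤ l) : UG2 c 0 = glueRows c := by
  rw [UG2, glueRows]
  simp only [List.range_zero, List.map_nil, List.append_nil]
  rw [show k - 0 = k from by omega]
  apply List.map_congr_left
  intro t ht
  rw [show t + 0 = t from by omega, ← rowL_take_succ c t (by omega : l - 1 < l),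
    Nat.sub_add_cancel hl, rowL_take_all]

/-- **G2**: the explicit witness for the combinatorial `R` on `c ⊗ 1_k`. -/
lemma G2 (c : RectTableau n k l) (hk : 1 ≤ k) (hl : 1 ≤ l) :
    rowInsertWord (toRows (shiftTab c)) (rowWord (lastColTab c hl)) = glueRows c := by
  have main : ∀ j, j ≤ k →
      rowInsertWord (UG2 c j) (((List.range j).reverse).map (fun i => En c i (l-1)))
        = UG2 c 0 := by
    intro j
    induction j with
    | zero => intro _; rfl
    | succ j ih =>
      intro hj
      have hrev : (List.range (j+1)).reverse = j :: (List.range j).reverse := by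
        rw [List.range_succ, List.reverse_append]
        rfl
      rw [hrev, List.map_cons, rowInsertWord_cons, UG2_step c hl hj]
      exact ih (by omega)
  have h0 := main k (le_refl k)
  rw [rowWord_lastColTab c hl, ← UG2_init c hl, h0, UG2_final c hl]

end BBS
namespace BBS

variable {n k l : ℕ}

lemma rect_ext {c d : RectTableau n k l} (h : ∀ i j, c.entry i j = d.entry i j) : c = d := by
  cases c with
  | mk e p1 p2 p3 p4 =>
    cases d with
    | mk e' q1 q2 q3 q4 =>
      have he : e = e' := funext fun i => funext fun j => h i j
      subst he
      rfl

lemma En_constTab (hkn : k ≤ n) {i j : ℕ} (hi : i < k) (hj : j < l) :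
    En (constTab n k l hkn) i j = i + 1 := by
  rw [En_eq _ hi hj]; rfl

lemma eq_constTab (x : RectTableau n k l) (hkn : k ≤ n)
    (h : ∀ i j, i < k → j < l → En x i j ≤ k) : x = constTab n k l hkn := by
  apply rect_ext
  intro i j
  have hlow := En_ge x i.isLt j.isLt
  have hup : En x i.1 j.1 + (k-1-i.1) ≤ En x (k-1) j.1 :=
    En_add_le' x (by omega) (by omega) j.isLt
  have hk1 := h (k-1) j.1 (by omega) j.isLt
  have hval : En x i.1 j.1 = i.1 + 1 := by omega
  calc x.entry i j = En x i.1 j.1 := (En_eq x i.isLt j.isLt).symm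
    _ = i.1 + 1 := hval
    _ = (constTab n k l hkn).entry i j := rfl

lemma mem_flatten_toRows (x : RectTableau n k l) {i j : ℕ} (hi : i < k) (hj : j < l) :
    En x i j ∈ (toRows x).flatten := by
  rw [toRows_eq]
  refine List.mem_flatten.2 ⟨rowL x i, List.mem_map.2 ⟨i, List.mem_range.2 hi, rfl⟩, ?_⟩
  rw [rowL]
  exact List.mem_map.2 ⟨j, List.mem_range.2 hj, rfl⟩

lemma flatten_bound (x : RectTableau n k l) (hk : 1 ≤ k) (hl : 1 ≤ l) {v : ℕ}
    (hv : v ∈ (toRows x).flatten) : v ≤ En x (k-1) (l-1) := by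
  rw [toRows_eq] at hv
  obtain ⟨r, hr, hvr⟩ := List.mem_flatten.1 hv
  obtain ⟨i, hik, rfl⟩ := List.mem_map.1 hr
  have hik' := List.mem_range.1 hik
  rw [rowL] at hvr
  obtain ⟨j, hjl, rfl⟩ := List.mem_map.1 hvr
  have hjl' := List.mem_range.1 hjl
  calc En x i j ≤ En x i (l-1) := En_row_mono x hik' (by omega) (by omega)
    _ ≤ En x (k-1) (l-1) := En_col_mono x (by omega) (by omega) (by omega)

lemma insert_perm (T : List (List ℕ)) (w : List ℕ) :
    ((rowInsertWord T w).flatten).Perm (T.flatten ++ w) := by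
  have h := msT_rowInsertWord T w
  rw [msT, msT] at h
  rw [← Multiset.coe_eq_coe]
  rw [h]
  rfl

lemma perm_rowWord (x : RectTableau n k l) : (rowWord x).Perm ((toRows x).flatten) := by
  rw [rowWord_eq, toRows_eq, List.flatMap_def, List.map_reverse]
  exact (List.reverse_perm _).flatten

lemma flatten_cons_map_perm (L : List ℕ) (g : ℕ → ℕ) (F : ℕ → List ℕ) :
    ((L.map (fun i => g i :: F i)).flatten).Perm (L.map g ++ (L.map F).flatten) := by
  induction L with
  | nil => simp
  | cons a t ih =>
    simp only [List.map_cons, List.flatten_cons, List.cons_append]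
    refine List.Perm.cons (g a) ?_
    have h1 : (F a ++ (t.map (fun i => g i :: F i)).flatten).Perm
        (F a ++ (t.map g ++ (t.map F).flatten)) := ih.append_left _
    refine h1.trans ?_
    have h2 : (F a ++ (t.map g ++ (t.map F).flatten))
        = (F a ++ t.map g) ++ (t.map F).flatten := by rw [List.append_assoc]
    have h3 : (t.map g ++ (F a ++ (t.map F).flatten))
        = (t.map g ++ F a) ++ (t.map F).flatten := by rw [List.append_assoc]
    rw [h2, h3]
    exact (List.perm_append_comm).append_right _

lemma glue_perm (c : RectTableau n k l) :
    ((glueRows c).flatten).Perm (((List.range k).map (fun i => i+1)) ++ (toRows c).flatten) := by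
  rw [glueRows, toRows_eq]
  exact flatten_cons_map_perm _ _ _

lemma flatten_toRows_const (hkn : k ≤ n) :
    (toRows (constTab n k 1 hkn)).flatten = (List.range k).map (fun i => i+1) := by
  rw [toRows_eq]
  have hone : (List.range k).map (rowL (constTab n k 1 hkn))
      = (List.range k).map (fun i => [i+1]) := by
    apply List.map_congr_left
    intro i hi
    rw [rowL, show List.range 1 = [0] from rfl, List.map_cons, List.map_nil,
      En_constTab hkn (List.mem_range.1 hi) (by omega)]
  rw [hone]
  have h2 := flatMap_singleton_map (List.range k) (fun i => i+1)
  rw [List.flatMap_def] at h2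
  exact h2

/-- The master content identity for any solution of the `combR` equation against
`c ⊗ 1_k`. -/
lemma master (c x : RectTableau n k l) (y : RectTableau n k 1) (hk : 1 ≤ k) (hl : 1 ≤ l)
    (hkn : k ≤ n)
    (heq : rowInsertWord (toRows x) (rowWord y)
      = rowInsertWord (toRows (constTab n k 1 hkn)) (rowWord c)) :
    ((toRows x).flatten ++ (toRows y).flatten).Perm
      (((List.range k).map (fun i => i+1)) ++ (toRows c).flatten) := by
  have h1 := insert_perm (toRows x) (rowWord y)
  rw [heq, G1 c hk hl hkn] at h1
  have h2 : ((toRows x).flatten ++ (toRows y).flatten).Perm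
      ((toRows x).flatten ++ rowWord y) := ((perm_rowWord y).symm).append_left _
  exact h2.trans (h1.symm.trans (glue_perm c))

lemma take_cons_pos (a : ℕ) (t : List ℕ) {m : ℕ} (hm : 1 ≤ m) :
    (a :: t).take m = a :: t.take (m-1) := by
  cases m with
  | zero => omega
  | succ m => simp

lemma count_bottom (x : RectTableau n k l) (M : ℕ) (hk : 1 ≤ k)
    (hbd : ∀ v ∈ (toRows x).flatten, v ≤ M) :
    ((toRows x).flatten).count M = (rowL x (k-1)).count M := by
  have er : List.range k = List.range (k-1) ++ [k-1] := by
    have h := List.range_succ (n := k-1)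
    rw [Nat.succ_eq_add_one, Nat.sub_add_cancel hk] at h
    exact h
  have hsplit : toRows x = (List.range (k-1)).map (rowL x) ++ [rowL x (k-1)] := by
    rw [toRows_eq, er, List.map_append]
    rfl
  rw [hsplit, List.flatten_append, List.count_append]
  have hz : (((List.range (k-1)).map (rowL x)).flatten).count M = 0 := by
    rw [List.count_eq_zero]
    intro hmem
    obtain ⟨r, hr, hvr⟩ := List.mem_flatten.1 hmem
    obtain ⟨i, hik, rfl⟩ := List.mem_map.1 hr
    have hik' := List.mem_range.1 hik
    rw [rowL] at hvr
    obtain ⟨j, hjl, hMe⟩ := List.mem_map.1 hvr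
    have hjl' := List.mem_range.1 hjl
    have h1 : En x i j < En x (k-1) j := En_col_strict x (by omega) (by omega) hjl'
    have h2 : En x (k-1) j ≤ M := hbd _ (mem_flatten_toRows x (by omega) hjl')
    omega
  rw [hz]
  simp

lemma toRows_length (x : RectTableau n k l) : (toRows x).length = k := by
  rw [toRows_eq]
  simp

lemma glueRows_length (c : RectTableau n k l) : (glueRows c).length = k := by
  rw [glueRows]
  simp

lemma getLast?_glueRows (c : RectTableau n k l) (hk : 1 ≤ k) :
    (glueRows c).getLast? = some (k :: rowL c (k-1)) := by
  have er : List.range k = List.range (k-1) ++ [k-1] := by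
    have h := List.range_succ (n := k-1)
    rw [Nat.succ_eq_add_one, Nat.sub_add_cancel hk] at h
    exact h
  rw [glueRows, er, List.map_append, List.map_cons, List.map_nil, List.getLast?_concat,
    Nat.sub_add_cancel hk]

lemma getLast?_toRows (x : RectTableau n k l) (hk : 1 ≤ k) :
    (toRows x).getLast? = some (rowL x (k-1)) := by
  have er : List.range k = List.range (k-1) ++ [k-1] := by
    have h := List.range_succ (n := k-1)
    rw [Nat.succ_eq_add_one, Nat.sub_add_cancel hk] at h
    exact h
  rw [toRows_eq, er, List.map_append, List.map_cons, List.map_nil, List.getLast?_concat]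

/-- **C2**: if `c` is not the constant tableau, no solution of the `combR` equation has the
vacuum column as its first component. -/
lemma no_vac (c x : RectTableau n k l) (hk : 1 ≤ k) (hl : 1 ≤ l) (hkn : k ≤ n)
    (hne : c ≠ constTab n k l hkn)
    (heq : rowInsertWord (toRows x) (rowWord (constTab n k 1 hkn))
      = rowInsertWord (toRows (constTab n k 1 hkn)) (rowWord c)) : False := by
  have hbig : k < En c (k-1) (l-1) := by
    by_contra hM'
    push_neg at hM'
    refine hne (eq_constTab c hkn ?_)
    intro i j hi hj
    calc En c i j ≤ En c i (l-1) := En_row_mono c hi (by omega) (by omega)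
      _ ≤ En c (k-1) (l-1) := En_col_mono c (by omega) (by omega) (by omega)
      _ ≤ k := hM'
  have hperm := master c x (constTab n k 1 hkn) hk hl hkn heq
  rw [← flatten_toRows_const hkn] at hperm
  have hcontent : ((toRows x).flatten).Perm ((toRows c).flatten) := by
    have h1 : ((toRows (constTab n k 1 hkn)).flatten ++ (toRows x).flatten).Perm
        ((toRows (constTab n k 1 hkn)).flatten ++ (toRows c).flatten) :=
      (List.perm_append_comm).symm.trans hperm
    exact (List.perm_append_left_iff _).1 h1
  have hbx : ∀ v ∈ (toRows x).flatten, v ≤ En c (k-1) (l-1) := fun v hv =>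
    flatten_bound c hk hl ((hcontent.mem_iff).1 hv)
  -- identify the last rows
  have heqG : rowInsertWord (toRows x) (rowWord (constTab n k 1 hkn)) = glueRows c := by
    rw [heq, G1 c hk hl hkn]
  have hTne : toRows x ≠ [] := by
    intro hh
    have := toRows_length x
    rw [hh] at this
    simp at this
    omega
  have hlen : (rowInsertWord (toRows x) (rowWord (constTab n k 1 hkn))).length
      = (toRows x).length := by
    rw [heqG, glueRows_length, toRows_length]
  obtain ⟨u, hu⟩ := lastRow_word hTne hlen
  rw [heqG, getLast?_glueRows c hk, getLast?_toRows x hk] at hu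
  simp only [Option.map_some] at hu
  have hu' : rowL x (k-1) ++ u = k :: rowL c (k-1) := by
    injection hu with hu
    exact hu.symm
  have hul : u.length = 1 := by
    have := congrArg List.length hu'
    simp only [List.length_append, List.length_cons, rowL_length] at this
    omega
  obtain ⟨u0, rfl⟩ := List.length_eq_one_iff.1 hul
  have hrow : rowL x (k-1) = k :: (rowL c (k-1)).take (l-1) := by
    have h1 : (rowL x (k-1) ++ [u0]).take l = rowL x (k-1) := by
      have := List.take_left (l₁ := rowL x (k-1)) (l₂ := [u0])
      rw [rowL_length] at this
      exact this
    rw [← h1, hu', take_cons_pos k _ hl]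
  -- counting the maximal entry
  have hdec : rowL c (k-1) = (rowL c (k-1)).take (l-1) ++ [En c (k-1) (l-1)] := by
    have h := rowL_take_succ c (k-1) (show l-1 < l from by omega)
    rw [Nat.sub_add_cancel hl, rowL_take_all] at h
    exact h
  have hc1 : (rowL c (k-1)).count (En c (k-1) (l-1))
      = ((rowL c (k-1)).take (l-1)).count (En c (k-1) (l-1)) + 1 := by
    conv_lhs => rw [hdec]
    rw [List.count_append]
    simp
  have hcx : (rowL x (k-1)).count (En c (k-1) (l-1))
      = ((rowL c (k-1)).take (l-1)).count (En c (k-1) (l-1)) := by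
    rw [hrow, List.count_cons]
    have : (k == En c (k-1) (l-1)) = false := by
      simp only [beq_eq_false_iff_ne, ne_eq]
      omega
    rw [this]
    simp
  have hbotc := count_bottom c (En c (k-1) (l-1)) hk (fun v hv => flatten_bound c hk hl hv)
  have hbotx := count_bottom x (En c (k-1) (l-1)) hk hbx
  have hcc := hcontent.count_eq (En c (k-1) (l-1))
  omega

/-- The vacuum carrier is a fixed point. -/
lemma combR_const (hkn : k ≤ n) (hk : 1 ≤ k) (hl : 1 ≤ l) :
    combR (constTab n k l hkn) (constTab n k 1 hkn)
      = (constTab n k 1 hkn, constTab n k l hkn) := by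
  unfold combR
  split
  next h =>
    have hspec := h.choose_spec
    have hperm := master (constTab n k l hkn) h.choose.2 h.choose.1 hk hl hkn hspec
    have hbound : ∀ v ∈ ((List.range k).map (fun i => i+1))
        ++ (toRows (constTab n k l hkn)).flatten, v ≤ k := by
      intro v hv
      rcases List.mem_append.1 hv with hv | hv
      · obtain ⟨i, hi, rfl⟩ := List.mem_map.1 hv
        have := List.mem_range.1 hi
        omega
      · have h1 := flatten_bound (constTab n k l hkn) hk hl hv
        rw [En_constTab hkn (by omega) (by omega)] at h1
        omega
    have hmem : ∀ v ∈ (toRows h.choose.2).flatten ++ (toRows h.choose.1).flatten, v ≤ k :=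
      fun v hv => hbound v ((hperm.mem_iff).1 hv)
    have h2 : h.choose.2 = constTab n k l hkn := by
      apply eq_constTab
      intro i j hi hj
      exact hmem _ (List.mem_append.2 (Or.inl (mem_flatten_toRows _ hi hj)))
    have h1' : h.choose.1 = constTab n k 1 hkn := by
      apply eq_constTab
      intro i j hi hj
      exact hmem _ (List.mem_append.2 (Or.inr (mem_flatten_toRows _ hi hj)))
    calc h.choose = (h.choose.1, h.choose.2) := rfl
      _ = (constTab n k 1 hkn, constTab n k l hkn) := by rw [h1', h2]
  next h => rfl

lemma sum_lt_col (y : RectTableau n k 1) (hkn : k ≤ n) (hk : 1 ≤ k)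
    (hy : y ≠ constTab n k 1 hkn) :
    ((List.range k).map (fun i => i+1)).sum < ((toRows y).flatten).sum := by
  have hflat : (toRows y).flatten = (List.range k).map (fun i => En y i 0) := by
    rw [toRows_eq]
    have hone : (List.range k).map (rowL y) = (List.range k).map (fun i => [En y i 0]) := by
      apply List.map_congr_left
      intro i hi
      rw [rowL, show List.range 1 = [0] from rfl]
      rfl
    rw [hone]
    have h2 := flatMap_singleton_map (List.range k) (fun i => En y i 0)
    rw [List.flatMap_def] at h2
    exact h2
  rw [hflat]
  apply List.sum_lt_sum
  · intro i hi
    exact En_ge y (List.mem_range.1 hi) (by omega)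
  · by_contra hno
    push_neg at hno
    refine hy (eq_constTab y hkn ?_)
    intro i j hi hj
    have hj0 : j = 0 := by omega
    subst hj0
    have h1 := En_ge y (j := 0) hi (by omega)
    have h2 := hno i (List.mem_range.2 hi)
    omega

/-- One vacuum step strictly decreases the entry sum of a non-constant carrier. -/
lemma step_dec (c : RectTableau n k l) (hkn : k ≤ n) (hk : 1 ≤ k) (hl : 1 ≤ l)
    (hc : c ≠ constTab n k l hkn) :
    ((toRows (combR c (constTab n k 1 hkn)).2).flatten).sum + 1
      ≤ ((toRows c).flatten).sum := by
  unfold combR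
  split
  next h =>
    have hspec := h.choose_spec
    have hperm := master c h.choose.2 h.choose.1 hk hl hkn hspec
    have hne1 : h.choose.1 ≠ constTab n k 1 hkn := by
      intro hv
      rw [hv] at hspec
      exact no_vac c h.choose.2 hk hl hkn hc hspec
    have hsum := hperm.sum_eq
    rw [List.sum_append, List.sum_append] at hsum
    have hlt := sum_lt_col h.choose.1 hkn hk hne1
    omega
  next h =>
    exact absurd ⟨(lastColTab c hl, shiftTab c), by
      show rowInsertWord (toRows (shiftTab c)) (rowWord (lastColTab c hl)) = _
      rw [G2 c hk hl, G1 c hk hl hkn]⟩ h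

lemma conv (hkn : k ≤ n) (hk : 1 ≤ k) (hl : 1 ≤ l) :
    ∀ s (c : RectTableau n k l), ((toRows c).flatten).sum ≤ s →
    ∀ m, s ≤ m →
      (fun x => (combR x (constTab n k 1 hkn)).2)^[m] c = constTab n k l hkn := by
  intro s
  induction s with
  | zero =>
    intro c hc m hm
    exfalso
    have h1 : 1 ≤ En c 0 0 := En_ge c (by omega) (by omega)
    have h2 : En c 0 0 ∈ (toRows c).flatten := mem_flatten_toRows c (by omega) (by omega)
    have h3 := List.single_le_sum (l := (toRows c).flatten)
      (by intro x _; exact Nat.zero_le x) _ h2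
    omega
  | succ s ih =>
    intro c hc m hm
    by_cases hceq : c = constTab n k l hkn
    · subst hceq
      refine Function.iterate_fixed ?_ m
      show (combR _ _).2 = _
      rw [combR_const hkn hk hl]
    · have hdec := step_dec c hkn hk hl hceq
      have hm1 : m = (m-1)+1 := by omega
      rw [hm1, Function.iterate_succ_apply]
      exact ih _ (by omega) (m-1) (by omega)

lemma carrierPass_snd_append (c : RectTableau n k l) (q r : List (RectTableau n k 1)) :
    (carrierPass c (q ++ r)).2 = (carrierPass (carrierPass c q).2 r).2 := by
  induction q generalizing c with
  | nil => rfl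
  | cons b t ih =>
    show (carrierPass (combR c b).2 (t ++ r)).2 = _
    rw [ih]
    rfl

lemma carrierPass_snd_replicate (c : RectTableau n k l) (b : RectTableau n k 1) (m : ℕ) :
    (carrierPass c (List.replicate m b)).2 = (fun x => (combR x b).2)^[m] c := by
  induction m generalizing c with
  | zero => rfl
  | succ m ih =>
    rw [List.replicate_succ]
    show (carrierPass (combR c b).2 (List.replicate m b)).2 = _
    rw [ih, Function.iterate_succ_apply]

end BBS


open BBS in
/-- passing the carrier `c_l` through a state `p = (⊗_j b_j) ⊗ 1_k^{⊗(L-d)}`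
by the iterated combinatorial `R` returns the carrier `c_l` itself, provided the number of
trailing vacuum boxes `1_k` is sufficiently large. -/
theorem carrier_returns {n k : ℕ} (hn : 2 ≤ n) (hk : 1 ≤ k) (hkn : k < n)
    (l : ℕ) (hl : 1 ≤ l) (q : List (RectTableau n k 1)) :
    ∃ N : ℕ, ∀ m : ℕ, N ≤ m →
      (carrierPass (constTab n k l hkn.le)
          (q ++ List.replicate m (constTab n k 1 hkn.le))).2 = constTab n k l hkn.le := by
  refine ⟨((toRows ((carrierPass (constTab n k l hkn.le) q).2)).flatten).sum, ?_⟩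
  intro m hm
  rw [carrierPass_snd_append, carrierPass_snd_replicate]
  exact conv hkn.le hk hl _ _ (le_refl _) m hm
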